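/- arXiv:2311.01416 — 7 statements merged into one kernel-verified Lean document; each statement's English description precedes it below -/
import Mathlib

section
/- Let S be a finite non-empty set of integers. Then the set of integers a such that |(S + a) \ S| < |S|/2 has size less than 2|S|. -/
theorem stmt_1 (S : Finset ℤ) (hS : S.Nonempty) :
    {a : ℤ | (((S.image (· + a)) \ S).card : ℚ) < (S.card : ℚ) / 2}.Finite ∧
    {a : ℤ | (((S.image (· + a)) \ S).card : ℚ) < (S.card : ℚ) / 2}.ncard < 2 * S.card := by
  set n := S.card with hn
  have hn0 : 0 < n := Finset.card_pos.2 hS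
  have hinj : ∀ a : ℤ, Function.Injective (· + a) := fun a x y h => by
    simpa using h
  have hcardim : ∀ a : ℤ, (S.image (· + a)).card = n :=
    fun a => Finset.card_image_of_injective S (hinj a)
  set fib : ℤ → ℕ := fun a => (S.filter (fun s => s + a ∈ S)).card with hfib
  have hfib_eq : ∀ a : ℤ, ((S.image (· + a)) ∩ S).card = fib a := by
    intro a
    have h1 : (S.image (· + a)) ∩ S = (S.filter (fun s => s + a ∈ S)).image (· + a) := by
      ext x
      simp only [Finset.mem_inter, Finset.mem_image, Finset.mem_filter]
      constructor
      · rintro ⟨⟨s, hs, rfl⟩, hx⟩; exact ⟨s, ⟨hs, hx⟩, rfl⟩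
      · rintro ⟨s, ⟨hs, hsa⟩, rfl⟩; exact ⟨⟨s, hs, rfl⟩, hsa⟩
    rw [h1, Finset.card_image_of_injective _ (hinj a)]
  have hsdiff : ∀ a : ℤ, ((S.image (· + a)) \ S).card + fib a = n := by
    intro a
    rw [← hfib_eq a, Finset.card_sdiff_add_card_inter, hcardim]
  have hcond : ∀ a : ℤ,
      ((((S.image (· + a)) \ S).card : ℚ) < (n : ℚ) / 2) ↔ ((n : ℚ) / 2 < (fib a : ℚ)) := by
    intro a
    have h : (((S.image (· + a)) \ S).card : ℚ) + (fib a : ℚ) = (n : ℚ) := by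
      exact_mod_cast congrArg (Nat.cast : ℕ → ℚ) (hsdiff a)
    constructor <;> intro h' <;> linarith
  -- difference set
  set T : Finset ℤ := (S ×ˢ S).image (fun p => p.2 - p.1) with hT
  set G : Finset ℤ := T.filter (fun a => (n : ℚ) / 2 < (fib a : ℚ)) with hG
  have hset : {a : ℤ | (((S.image (· + a)) \ S).card : ℚ) < (S.card : ℚ) / 2} = ↑G := by
    ext a
    simp only [Set.mem_setOf_eq, Finset.coe_filter, Set.mem_setOf_eq, hG, ← hn]
    rw [hcond a]
    constructor
    · intro h
      refine ⟨?_, h⟩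
      have hpos : 0 < fib a := by
        by_contra hc
        push_neg at hc
        interval_cases h' : fib a
        · simp only [Nat.cast_zero] at h
          have : (0:ℚ) < (n:ℚ) / 2 := by positivity
          linarith
      obtain ⟨s, hs⟩ := Finset.card_pos.1 hpos
      simp only [Finset.mem_filter] at hs
      simp only [hT, Finset.mem_image, Finset.mem_product]
      exact ⟨(s, s + a), ⟨hs.1, hs.2⟩, by ring⟩
    · exact fun h => h.2
  -- double counting: sum of fib over T equals n^2
  have hsum : ∑ a ∈ T, fib a = n * n := by
    have key : (S ×ˢ S).card = ∑ a ∈ T, ((S ×ˢ S).filter (fun p => p.2 - p.1 = a)).card := by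
      apply Finset.card_eq_sum_card_fiberwise
      intro p hp
      simp only [hT, Finset.mem_image]
      exact Finset.mem_image_of_mem _ hp
    have fibeq : ∀ a : ℤ, ((S ×ˢ S).filter (fun p => p.2 - p.1 = a)).card = fib a := by
      intro a
      have h1 : (S ×ˢ S).filter (fun p => p.2 - p.1 = a)
          = (S.filter (fun s => s + a ∈ S)).image (fun s => (s, s + a)) := by
        ext ⟨x, y⟩
        simp only [Finset.mem_filter, Finset.mem_product, Finset.mem_image, Prod.mk.injEq]
        constructor
        · rintro ⟨⟨hx, hy⟩, hxy⟩
          exact ⟨x, ⟨hx, by rw [show x + a = y by omega]; exact hy⟩, rfl, by omega⟩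
        · rintro ⟨s, ⟨hs, hsa⟩, rfl, rfl⟩
          exact ⟨⟨hs, hsa⟩, by ring⟩
      rw [h1, Finset.card_image_of_injective]
      intro x y h
      exact (Prod.mk.injEq _ _ _ _ ▸ h).1
    rw [Finset.card_product, ← hn] at key
    rw [key]
    exact Finset.sum_congr rfl fun a _ => (fibeq a).symm
  have hncard : {a : ℤ | (((S.image (· + a)) \ S).card : ℚ) < (S.card : ℚ) / 2}.ncard = G.card := by
    rw [hset, Set.ncard_coe_finset]
  refine ⟨hset ▸ G.finite_toSet, ?_⟩
  rw [hncard]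
  rcases eq_or_ne G ∅ with hGe | hGe
  · rw [hGe]; simp only [Finset.card_empty]; omega
  · have hGne : G.Nonempty := Finset.nonempty_iff_ne_empty.2 hGe
    have h1 : (G.card : ℚ) * ((n : ℚ) / 2) < ∑ a ∈ G, (fib a : ℚ) := by
      have := Finset.sum_lt_sum_of_nonempty hGne
        (f := fun _ => (n : ℚ) / 2) (g := fun a => (fib a : ℚ))
        (fun a ha => (Finset.mem_filter.1 ha).2)
      simpa [mul_comm] using this
    have h2 : ∑ a ∈ G, (fib a : ℚ) ≤ ∑ a ∈ T, (fib a : ℚ) := by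
      apply Finset.sum_le_sum_of_subset_of_nonneg (Finset.filter_subset _ _)
      intro a _ _; positivity
    have h3 : ∑ a ∈ T, (fib a : ℚ) = (n : ℚ) * n := by
      exact_mod_cast congrArg (Nat.cast : ℕ → ℚ) hsum
    have h4 : (G.card : ℚ) < 2 * n := by
      rw [h3] at h2
      have hnq : (0:ℚ) < n := by exact_mod_cast hn0
      nlinarith
    exact_mod_cast h4
end

section
/- Let S and A be finite non-empty sets of integers and let k be a positive integer such that |kA| ≥ 2|S|, where kA denotes the k-fold sumset {a_1 + ... + a_k : a_i ∈ A}. Then there exists a ∈ A such that |(S + a) \ S| ≥ |S|/(2k). -/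
open Finset

/-- The `k`-fold sumset of a finite set of integers. -/
def nfoldSumset (k : ℕ) (A : Finset ℤ) : Finset ℤ :=
  (Fintype.piFinset fun _ : Fin k => A).image fun f => ∑ i, f i

lemma subadd (S : Finset ℤ) (x y : ℤ) :
    ((S.image (· + (x + y))) \ S).card ≤
      ((S.image (· + x)) \ S).card + ((S.image (· + y)) \ S).card := by
  have hsub : (S.image (· + (x + y))) \ S ⊆
      (((S.image (· + x)) \ S).image (· + y)) ∪ ((S.image (· + y)) \ S) := by
    intro t ht
    simp only [mem_sdiff, mem_union, mem_image] at *
    obtain ⟨⟨s, hs, hst⟩, htS⟩ := ht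
    by_cases hy : ∃ u ∈ S, u + y = t
    · obtain ⟨u, hu, hut⟩ := hy
      exact Or.inr ⟨⟨u, hu, hut⟩, htS⟩
    · push_neg at hy
      exact Or.inl ⟨s + x, ⟨⟨s, hs, rfl⟩, fun hsx => hy (s + x) hsx (by linarith)⟩, by linarith⟩
  calc ((S.image (· + (x + y))) \ S).card
      ≤ ((((S.image (· + x)) \ S).image (· + y)) ∪ ((S.image (· + y)) \ S)).card :=
        card_le_card hsub
    _ ≤ (((S.image (· + x)) \ S).image (· + y)).card + ((S.image (· + y)) \ S).card :=
        card_union_le _ _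
    _ = ((S.image (· + x)) \ S).card + ((S.image (· + y)) \ S).card := by
        rw [card_image_of_injective _ (add_left_injective y)]

lemma subadd_sum (S : Finset ℤ) {ι : Type*} [DecidableEq ι] (t : Finset ι) (f : ι → ℤ) :
    ((S.image (· + ∑ i ∈ t, f i)) \ S).card ≤ ∑ i ∈ t, ((S.image (· + f i)) \ S).card := by
  induction t using Finset.cons_induction with
  | empty => simp
  | cons a t ha ih =>
      rw [Finset.sum_cons, Finset.sum_cons]
      exact (subadd S (f a) _).trans (Nat.add_le_add_left ih _)

lemma inter_eq_filter (S : Finset ℤ) (x : ℤ) :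
    (S.image (· + x)) ∩ S = S.filter (fun t => t - x ∈ S) := by
  ext t
  simp only [mem_inter, mem_image, mem_filter]
  constructor
  · rintro ⟨⟨s, hs, rfl⟩, ht⟩
    exact ⟨ht, by simpa using hs⟩
  · rintro ⟨ht, hs⟩
    exact ⟨⟨t - x, hs, by ring⟩, ht⟩

lemma fiber_card (S : Finset ℤ) (x : ℤ) :
    ((S ×ˢ S).filter fun p => p.2 - p.1 = x).card = (S.filter (fun t => t - x ∈ S)).card := by
  apply Finset.card_bij' (fun p _ => p.2) (fun t _ => (t - x, t))
  · rintro ⟨a, b⟩ hp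
    simp only [mem_filter, mem_product] at hp ⊢
    obtain ⟨⟨ha, hb⟩, hx⟩ := hp
    constructor
    · exact hb
    · have : b - x = a := by linarith
      rwa [this]
  · intro t ht
    simp only [mem_filter, mem_product] at ht ⊢
    exact ⟨⟨ht.2, ht.1⟩, by ring⟩
  · rintro ⟨a, b⟩ hp
    simp only [mem_filter, mem_product] at hp
    have : b - x = a := by linarith [hp.2]
    simp [this]
  · intro t ht; rfl

theorem stmt_2 (S A : Finset ℤ) (hS : S.Nonempty) (hA : A.Nonempty) (k : ℕ) (hk : 0 < k)
    (h : 2 * S.card ≤ (nfoldSumset k A).card) :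
    ∃ a ∈ A, (S.card : ℝ) / (2 * k) ≤ (((S.image (· + a)) \ S).card : ℝ) := by
  by_contra hcon
  push_neg at hcon
  set n := S.card with hn
  have hkR : (0:ℝ) < k := by exact_mod_cast hk
  -- pointwise bound for each element of the k-fold sumset
  have hptwise : ∀ x ∈ nfoldSumset k A,
      (n : ℝ) / 2 < (((S.image (· + x)) ∩ S).card : ℝ) := by
    intro x hx
    obtain ⟨f, hf, rfl⟩ := mem_image.mp hx
    have hfA : ∀ i, f i ∈ A := by rwa [Fintype.mem_piFinset] at hf
    have hd : ((((S.image (· + ∑ i, f i)) \ S).card : ℝ)) < n / 2 := by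
      have h1 : (((S.image (· + ∑ i, f i)) \ S).card : ℝ) ≤
          ∑ i, (((S.image (· + f i)) \ S).card : ℝ) := by
        exact_mod_cast subadd_sum S Finset.univ f
      have h2 : ∑ i : Fin k, (((S.image (· + f i)) \ S).card : ℝ) <
          ∑ _i : Fin k, (n : ℝ) / (2 * k) :=
        Finset.sum_lt_sum_of_nonempty (Finset.univ_nonempty_iff.mpr ⟨⟨0, hk⟩⟩)
          (fun i _ => hcon _ (hfA i))
      have h3 : ∑ _i : Fin k, (n : ℝ) / (2 * k) = n / 2 := by
        rw [Finset.sum_const, Finset.card_univ, Fintype.card_fin, nsmul_eq_mul]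
        field_simp
      linarith
    have hcard : ((S.image (· + ∑ i, f i)).card) = n :=
      card_image_of_injective _ (add_left_injective _)
    have := Finset.card_inter_add_card_sdiff (S.image (· + ∑ i, f i)) S
    rw [hcard] at this
    have : (((S.image (· + ∑ i, f i)) ∩ S).card : ℝ) +
        (((S.image (· + ∑ i, f i)) \ S).card : ℝ) = n := by exact_mod_cast this
    linarith
  -- total count is at most n^2
  have hcount : ∑ x ∈ nfoldSumset k A, (((S.image (· + x)) ∩ S).card) ≤ n * n := by
    have hmap : ∀ p ∈ (S ×ˢ S).filter (fun p => p.2 - p.1 ∈ nfoldSumset k A),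
        (fun p : ℤ × ℤ => p.2 - p.1) p ∈ nfoldSumset k A := fun p hp => (mem_filter.mp hp).2
    have hfib := Finset.card_eq_sum_card_fiberwise hmap
    have hre : ∀ x ∈ nfoldSumset k A,
        (((S ×ˢ S).filter (fun p => p.2 - p.1 ∈ nfoldSumset k A)).filter
          (fun p => p.2 - p.1 = x)).card = (((S.image (· + x)) ∩ S).card) := by
      intro x hx
      rw [Finset.filter_filter, inter_eq_filter, ← fiber_card]
      congr 1
      apply Finset.filter_congr
      intro p _
      constructor
      · exact fun hp => hp.2
      · exact fun hp => ⟨by rw [hp]; exact hx, hp⟩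
    rw [Finset.sum_congr rfl hre] at hfib
    calc ∑ x ∈ nfoldSumset k A, (((S.image (· + x)) ∩ S).card)
        = ((S ×ˢ S).filter (fun p => p.2 - p.1 ∈ nfoldSumset k A)).card := hfib.symm
      _ ≤ (S ×ˢ S).card := Finset.card_filter_le _ _
      _ = n * n := by rw [Finset.card_product]
  -- lower bound on the total count
  have hKA : (nfoldSumset k A).Nonempty := by
    obtain ⟨a, ha⟩ := hA
    exact ⟨∑ _i : Fin k, a, mem_image.mpr ⟨fun _ => a, by simp [Fintype.mem_piFinset, ha], rfl⟩⟩
  have hlow : (n : ℝ) * n < ∑ x ∈ nfoldSumset k A, (((S.image (· + x)) ∩ S).card : ℝ) := by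
    have h1 : ∑ _x ∈ nfoldSumset k A, (n : ℝ) / 2 <
        ∑ x ∈ nfoldSumset k A, (((S.image (· + x)) ∩ S).card : ℝ) :=
      Finset.sum_lt_sum_of_nonempty hKA hptwise
    have h2 : (n : ℝ) * n ≤ ∑ _x ∈ nfoldSumset k A, (n : ℝ) / 2 := by
      rw [Finset.sum_const, nsmul_eq_mul]
      have hc : (2 * n : ℝ) ≤ ((nfoldSumset k A).card : ℝ) := by exact_mod_cast h
      have hn0 : (0:ℝ) ≤ (n:ℝ) / 2 := by positivity
      nlinarith
    linarith
  have hcountR : ∑ x ∈ nfoldSumset k A, (((S.image (· + x)) ∩ S).card : ℝ) ≤ (n : ℝ) * n := by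
    exact_mod_cast hcount
  linarith
end

section
/- Let Q be a d-dimensional generalized arithmetic progression with widths (w_1, ..., w_d) which is not proper. Then |2Q| + w_1·w_2···w_d ≤ ∏_{i=1}^{d}(2w_i − 1). In particular, |2Q| < (2^d − 1)·Vol(Q), where Vol(Q) = ∏ w_i. -/
open Pointwise

/-- The generalized arithmetic progression with base `x`, differences `q` and widths `w`. -/
def GAP (d : ℕ) (x : ℤ) (q : Fin d → ℤ) (w : Fin d → ℕ) : Finset ℤ :=
  Finset.image (fun n : ∀ i, Fin (w i) => x + ∑ i, ((n i : ℕ) : ℤ) * q i) Finset.univ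

theorem stmt_4 (d : ℕ) (x : ℤ) (q : Fin d → ℤ) (w : Fin d → ℕ) (hw : ∀ i, 0 < w i)
    (hnp : (GAP d x q w).card ≠ ∏ i, w i) :
    (GAP d x q w + GAP d x q w).card + ∏ i, w i ≤ ∏ i, (2 * w i - 1) ∧
    (GAP d x q w + GAP d x q w).card < (2 ^ d - 1) * ∏ i, w i := by
  classical
  set g : (∀ i, Fin (w i)) → ℤ := fun n => x + ∑ i, ((n i : ℕ) : ℤ) * q i with hg
  have hninj : ¬ Function.Injective g := by
    intro h
    apply hnp
    rw [GAP]
    rw [Finset.card_image_of_injective _ h, Finset.card_univ, Fintype.card_pi]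
    simp
  obtain ⟨a, b, hab, hne⟩ := Function.not_injective_iff.mp hninj
  obtain ⟨k, hk0, hkb, j, hkj⟩ :
      ∃ k : Fin d → ℤ, (∑ i, k i * q i = 0) ∧
        (∀ i, -((w i : ℤ) - 1) ≤ k i ∧ k i ≤ (w i : ℤ) - 1) ∧ ∃ j, 0 < k j := by
    obtain ⟨j, hj⟩ := Function.ne_iff.mp hne
    have hsum : ∑ i, ((a i : ℕ) : ℤ) * q i = ∑ i, ((b i : ℕ) : ℤ) * q i := by
      have h := hab
      simp only [hg] at h
      linarith
    have hbd : ∀ i, -((w i : ℤ) - 1) ≤ ((a i : ℕ) : ℤ) - ((b i : ℕ) : ℤ) ∧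
        ((a i : ℕ) : ℤ) - ((b i : ℕ) : ℤ) ≤ (w i : ℤ) - 1 := by
      intro i
      have h1 : (a i : ℕ) < w i := (a i).isLt
      have h2 : (b i : ℕ) < w i := (b i).isLt
      omega
    have hjne : ((a j : ℕ) : ℤ) ≠ ((b j : ℕ) : ℤ) := by
      have : (a j : ℕ) ≠ (b j : ℕ) := fun h => hj (Fin.ext h)
      exact_mod_cast this
    rcases lt_or_gt_of_ne hjne with h | h
    · refine ⟨fun i => ((b i : ℕ) : ℤ) - ((a i : ℕ) : ℤ), ?_, ?_, j, by dsimp only; omega⟩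
      · simp only [sub_mul, Finset.sum_sub_distrib, hsum, sub_self]
      · intro i; have := hbd i; dsimp only; omega
    · refine ⟨fun i => ((a i : ℕ) : ℤ) - ((b i : ℕ) : ℤ), ?_, ?_, j, by dsimp only; omega⟩
      · simp only [sub_mul, Finset.sum_sub_distrib, hsum, sub_self]
      · intro i; have := hbd i; dsimp only; omega
  set box : Finset (Fin d → ℤ) :=
    Fintype.piFinset fun i => Finset.Icc 0 (2 * (w i : ℤ) - 2) with hbox
  set S : Finset (Fin d → ℤ) :=
    Fintype.piFinset fun i => Finset.Icc (max 0 (-k i)) (2 * (w i : ℤ) - 2 - max 0 (k i)) with hS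
  set f : (Fin d → ℤ) → ℤ := fun N => 2 * x + ∑ i, N i * q i with hf
  have hmemS : ∀ N : Fin d → ℤ, N ∈ S ↔
      ∀ i, max 0 (-k i) ≤ N i ∧ N i ≤ 2 * (w i : ℤ) - 2 - max 0 (k i) := by
    intro N
    simp [hS, Fintype.mem_piFinset, Finset.mem_Icc]
  have hmembox : ∀ N : Fin d → ℤ, N ∈ box ↔ ∀ i, 0 ≤ N i ∧ N i ≤ 2 * (w i : ℤ) - 2 := by
    intro N
    simp [hbox, Fintype.mem_piFinset, Finset.mem_Icc]
  have hSbox : S ⊆ box := by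
    intro N hN
    rw [hmemS] at hN
    rw [hmembox]
    intro i
    have h1 := hN i
    have h2 := (hkb i).1
    have h3 := (hkb i).2
    constructor <;> omega
  have descent : ∀ t : ℕ, ∀ N ∈ box, (2 * (w j : ℤ) - 2 - N j).toNat ≤ t →
      ∃ M ∈ box \ S, f M = f N := by
    intro t
    induction t with
    | zero =>
      intro N hN hm
      refine ⟨N, Finset.mem_sdiff.mpr ⟨hN, ?_⟩, rfl⟩
      intro hNS
      have h1 := (hmemS N).mp hNS j
      omega
    | succ t ih =>
      intro N hN hm
      by_cases hNS : N ∈ S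
      · have hNS' := (hmemS N).mp hNS
        set N' : Fin d → ℤ := fun i => N i + k i with hN'def
        have hN' : N' ∈ box := by
          rw [hmembox]
          intro i
          have h1 := hNS' i
          simp only [hN'def]
          omega
        have hfN' : f N' = f N := by
          simp only [hf, hN'def]
          simp only [add_mul, Finset.sum_add_distrib, hk0, add_zero]
        have hm' : (2 * (w j : ℤ) - 2 - N' j).toNat ≤ t := by
          have h1 := hNS' j
          simp only [hN'def]
          omega
        obtain ⟨M, hM, hfM⟩ := ih N' hN' hm'
        exact ⟨M, hM, by rw [hfM, hfN']⟩
      · exact ⟨N, Finset.mem_sdiff.mpr ⟨hN, hNS⟩, rfl⟩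
  have hcover : GAP d x q w + GAP d x q w ⊆ (box \ S).image f := by
    intro y hy
    rw [Finset.mem_add] at hy
    obtain ⟨u, hu, v, hv, rfl⟩ := hy
    rw [GAP, Finset.mem_image] at hu hv
    obtain ⟨a', -, rfl⟩ := hu
    obtain ⟨b', -, rfl⟩ := hv
    set N : Fin d → ℤ := fun i => ((a' i : ℕ) : ℤ) + ((b' i : ℕ) : ℤ) with hNdef
    have hNbox : N ∈ box := by
      rw [hmembox]
      intro i
      have h1 : (a' i : ℕ) < w i := (a' i).isLt
      have h2 : (b' i : ℕ) < w i := (b' i).isLt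
      simp only [hNdef]
      omega
    have hfN : f N = (x + ∑ i, ((a' i : ℕ) : ℤ) * q i) + (x + ∑ i, ((b' i : ℕ) : ℤ) * q i) := by
      simp only [hf, hNdef]
      simp only [add_mul, Finset.sum_add_distrib]
      ring
    obtain ⟨M, hM, hfM⟩ := descent (2 * (w j : ℤ) - 2).toNat N hNbox (by
      have := (hmembox N).mp hNbox j
      omega)
    rw [Finset.mem_image]
    exact ⟨M, hM, by rw [hfM, hfN]⟩
  have hboxcard : box.card = ∏ i, (2 * w i - 1) := by
    rw [hbox, Fintype.card_piFinset]
    refine Finset.prod_congr rfl fun i _ => ?_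
    rw [Int.card_Icc]
    have := hw i
    omega
  have hScard : ∏ i, w i ≤ S.card := by
    rw [hS, Fintype.card_piFinset]
    refine Finset.prod_le_prod' fun i _ => ?_
    rw [Int.card_Icc]
    have h2 := (hkb i).1
    have h3 := (hkb i).2
    have := hw i
    omega
  have h1 : (GAP d x q w + GAP d x q w).card ≤ box.card - S.card := by
    calc (GAP d x q w + GAP d x q w).card ≤ ((box \ S).image f).card :=
          Finset.card_le_card hcover
      _ ≤ (box \ S).card := Finset.card_image_le
      _ = box.card - S.card := Finset.card_sdiff_of_subset hSbox
  have hSle := Finset.card_le_card hSbox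
  have hfirst : (GAP d x q w + GAP d x q w).card + ∏ i, w i ≤ ∏ i, (2 * w i - 1) := by
    omega
  refine ⟨hfirst, ?_⟩
  have hstrict : ∏ i, (2 * w i - 1) < 2 ^ d * ∏ i, w i := by
    have h2 : 2 ^ d * ∏ i, w i = ∏ i, 2 * w i := by
      rw [Finset.prod_mul_distrib, Finset.prod_const, Finset.card_univ, Fintype.card_fin]
    rw [h2]
    refine Finset.prod_lt_prod (fun i _ => by have := hw i; omega)
      (fun i _ => by omega) ⟨j, Finset.mem_univ j, by have := hw j; omega⟩
  have hpow : 1 ≤ 2 ^ d := Nat.one_le_two_pow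
  have hmul : (2 ^ d - 1) * ∏ i, w i = 2 ^ d * ∏ i, w i - ∏ i, w i := by
    rw [Nat.sub_mul, one_mul]
  omega
end

section
/- Let c be a real with 0 < c ≤ 1, and let A = {Σ_{i=1}^{d} n_i q_i : n_i ∈ [a_i, b_i]} be a homogeneous GAP each of whose widths b_i − a_i + 1 is at least 1 + 4/c. Then the integer multifold sumset 2⌈1/c⌉ · (cA) contains a translate of A, where cA = {Σ n_i q_i : c·a_i ≤ n_i ≤ c·b_i}. -/
/-- The homogeneous GAP `{∑ n_i q_i : a_i ≤ n_i ≤ b_i}` with integer coefficients in real intervals. -/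
def hGAP (d : ℕ) (q : Fin d → ℤ) (a b : Fin d → ℝ) : Set ℤ :=
  {y | ∃ n : Fin d → ℤ, (∀ i, a i ≤ (n i : ℝ) ∧ (n i : ℝ) ≤ b i) ∧ y = ∑ i, n i * q i}

/-- The `k`-fold sumset of a set of integers. -/
def nfoldSet (k : ℕ) (A : Set ℤ) : Set ℤ :=
  {x | ∃ f : Fin k → ℤ, (∀ i, f i ∈ A) ∧ x = ∑ i, f i}

lemma key_lemma (s : ℕ) : ∀ (L U m : ℤ), L ≤ U → (s:ℤ)*L ≤ m → m ≤ (s:ℤ)*U →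
    ∃ f : Fin s → ℤ, (∀ j, L ≤ f j ∧ f j ≤ U) ∧ m = ∑ j, f j := by
  induction s with
  | zero =>
    intro L U m _ h1 h2
    refine ⟨fun j => j.elim0, fun j => j.elim0, ?_⟩
    simp at h1 h2 ⊢
    omega
  | succ n ih =>
    intro L U m hLU h1 h2
    push_cast at h1 h2
    set x := min U (m - (n:ℤ)*L) with hx
    have hxL : L ≤ x := le_min hLU (by linarith)
    have h3 : (n:ℤ)*L ≤ m - x := by
      have := min_le_right U (m - (n:ℤ)*L); linarith
    have h4 : m - x ≤ (n:ℤ)*U := by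
      have hPQ : (n:ℤ)*L ≤ (n:ℤ)*U := mul_le_mul_of_nonneg_left hLU (by positivity)
      rcases min_cases U (m - (n:ℤ)*L) with ⟨h, _⟩ | ⟨h, _⟩ <;> rw [hx, h] <;> linarith
    obtain ⟨g, hg1, hg2⟩ := ih L U (m - x) hLU h3 h4
    refine ⟨Fin.cons x g, ?_, ?_⟩
    · intro j
      refine Fin.cases ?_ ?_ j
      · exact ⟨hxL, min_le_left _ _⟩
      · exact hg1
    · rw [Fin.sum_cons, ← hg2]; ring

theorem stmt_7 (c : ℝ) (hc : 0 < c) (hc1 : c ≤ 1) (d : ℕ) (q : Fin d → ℤ) (a b : Fin d → ℝ)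
    (hw : ∀ i, 1 + 4 / c ≤ b i - a i + 1) :
    ∃ t : ℤ, (· + t) '' hGAP d q a b ⊆
      nfoldSet (2 * ⌈1 / c⌉₊) (hGAP d q (fun i => c * a i) (fun i => c * b i)) := by
  set s : ℕ := 2 * ⌈1 / c⌉₊ with hs
  have hsge : (2:ℝ)/c ≤ (s:ℝ) := by
    have h := Nat.le_ceil (1/c)
    rw [hs]; push_cast
    rw [div_le_iff₀ hc] at *
    nlinarith [Nat.le_ceil (1/c)]
  have hsR : 2 ≤ (s:ℝ) * c := by
    rw [div_le_iff₀ hc] at hsge; linarith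
  set L : Fin d → ℤ := fun i => ⌈c * a i⌉ with hL
  set U : Fin d → ℤ := fun i => ⌊c * b i⌋ with hU
  set ti : Fin d → ℤ := fun i => (s:ℤ) * L i - ⌈a i⌉ with hti
  have hcw : ∀ i, 4 ≤ c * (b i - a i) := by
    intro i
    have h := hw i
    have h2 : 4 / c ≤ b i - a i := by linarith
    rw [div_le_iff₀ hc] at h2
    linarith
  have hUL : ∀ i, c * (b i - a i) - 2 ≤ (U i : ℝ) - (L i : ℝ) := by
    intro i
    have h1 := Int.sub_one_lt_floor (c * b i)
    have h2 := Int.ceil_lt_add_one (c * a i)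
    simp only [hL, hU]
    linarith
  have hLU : ∀ i, L i ≤ U i := by
    intro i
    have := hUL i
    have := hcw i
    have : (L i : ℝ) ≤ (U i : ℝ) := by linarith
    exact_mod_cast this
  refine ⟨∑ i, ti i * q i, ?_⟩
  rintro y ⟨x, ⟨n, hn, rfl⟩, rfl⟩
  have hmain : ∀ i, ∃ f : Fin s → ℤ, (∀ j, L i ≤ f j ∧ f j ≤ U i) ∧ n i + ti i = ∑ j, f j := by
    intro i
    refine key_lemma s (L i) (U i) (n i + ti i) (hLU i) ?_ ?_
    · have h1 : ⌈a i⌉ ≤ n i := Int.ceil_le.mpr (hn i).1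
      simp only [hti]; linarith
    · have h1 : n i - ⌈a i⌉ ≤ (s:ℤ) * (U i - L i) := by
        have hr : ((n i : ℤ) - ⌈a i⌉ : ℝ) ≤ (((s:ℤ) * (U i - L i) : ℤ) : ℝ) := by
          push_cast
          have hn2 : (n i : ℝ) ≤ b i := (hn i).2
          have ha2 : a i ≤ (⌈a i⌉ : ℝ) := Int.le_ceil (a i)
          have hUL0 : (0:ℝ) ≤ (U i : ℝ) - (L i : ℝ) := by
            have := hUL i; have := hcw i; linarith
          have e1 : (2:ℝ) * ((U i : ℝ) - L i) ≤ ((s:ℝ) * c) * ((U i : ℝ) - L i) :=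
            mul_le_mul_of_nonneg_right hsR hUL0
          have e2 : c * (b i - a i) ≤ 2 * ((U i : ℝ) - L i) := by
            have := hUL i; have := hcw i; linarith
          have e3 : c * (b i - a i) ≤ c * ((s:ℝ) * ((U i : ℝ) - L i)) := by nlinarith
          have e4 : b i - a i ≤ (s:ℝ) * ((U i : ℝ) - L i) :=
            le_of_mul_le_mul_left e3 hc
          linarith
        exact_mod_cast hr
      simp only [hti]; linarith
  choose F hF1 hF2 using hmain
  refine ⟨fun j => ∑ i, F i j * q i, ?_, ?_⟩
  · intro j
    refine ⟨fun i => F i j, fun i => ⟨?_, ?_⟩, rfl⟩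
    · show c * a i ≤ ((F i j : ℤ) : ℝ)
      have h1 : c * a i ≤ (L i : ℝ) := Int.le_ceil _
      have h2 : (L i : ℝ) ≤ (F i j : ℝ) := by exact_mod_cast (hF1 i j).1
      linarith
    · show ((F i j : ℤ) : ℝ) ≤ c * b i
      have h1 : (U i : ℝ) ≤ c * b i := Int.floor_le _
      have h2 : (F i j : ℝ) ≤ (U i : ℝ) := by exact_mod_cast (hF1 i j).2
      linarith
  · calc (∑ i, n i * q i) + ∑ i, ti i * q i
        = ∑ i, (n i + ti i) * q i := by
          rw [← Finset.sum_add_distrib]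
          exact Finset.sum_congr rfl fun i _ => by ring
      _ = ∑ i, (∑ j, F i j) * q i :=
          Finset.sum_congr rfl fun i _ => by rw [← hF2 i]
      _ = ∑ j, ∑ i, F i j * q i := by
          rw [Finset.sum_comm]
          exact Finset.sum_congr rfl fun i _ => by rw [Finset.sum_mul]
end

section
/- In any set A of m distinct integer points in ℤ^d with affine dimension d, there exist d+1 points of A such that the simplex with these points as vertices has (Euclidean) volume at least m/(2^d · (d+1)!). -/
open Matrix



section MatrixAux

variable {d : ℕ}

private lemma my_updateRow_comm (A : Matrix (Fin d) (Fin d) ℤ) {i j : Fin d} (hij : i ≠ j)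
    (x y : Fin d → ℤ) :
    (A.updateRow i x).updateRow j y = (A.updateRow j y).updateRow i x := by
  ext r k
  rcases eq_or_ne r j with rfl | hrj
  · rw [updateRow_self, updateRow_ne (Ne.symm hij), updateRow_self]
  · rw [updateRow_ne hrj]
    rcases eq_or_ne r i with rfl | hri
    · rw [updateRow_self, updateRow_self]
    · rw [updateRow_ne hri, updateRow_ne hri, updateRow_ne hrj]

private lemma my_det_updateRow_finset_sum (A : Matrix (Fin d) (Fin d) ℤ) (i : Fin d)
    (t : Finset (Fin d)) (g : Fin d → (Fin d → ℤ)) :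
    (A.updateRow i (∑ s ∈ t, g s)).det = ∑ s ∈ t, (A.updateRow i (g s)).det := by
  classical
  induction t using Finset.induction_on with
  | empty =>
      simp only [Finset.sum_empty]
      exact det_eq_zero_of_row_eq_zero i (fun k => by simp)
  | insert _ _ hns ih =>
      rw [Finset.sum_insert hns, Finset.sum_insert hns, det_updateRow_add, ih]

private lemma my_det_updateRow_sum_smul (A : Matrix (Fin d) (Fin d) ℤ) (i : Fin d)
    (c : Fin d → ℤ) (v : Fin d → (Fin d → ℤ)) :
    (A.updateRow i (∑ s, c s • v s)).det = ∑ s, c s * (A.updateRow i (v s)).det := by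
  rw [my_det_updateRow_finset_sum]
  exact Finset.sum_congr rfl fun s _ => by rw [det_updateRow_smul]

/-- Cramer-type identity for rows. -/
private lemma my_sum_det_smul_rows (M : Matrix (Fin d) (Fin d) ℤ) (y : Fin d → ℤ) :
    ∑ s, (M.updateRow s y).det • M s = M.det • y := by
  have h := Matrix.mulVec_cramer Mᵀ y
  have hc : ∀ s, Mᵀ.cramer y s = (M.updateRow s y).det := by
    intro s
    rw [Matrix.cramer_apply, Matrix.updateCol_transpose, Matrix.det_transpose]
  funext j
  have hj := congrFun h j
  rw [Matrix.det_transpose] at hj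
  calc (∑ s, (M.updateRow s y).det • M s) j
      = ∑ s, (M.updateRow s y).det * M s j := by
        rw [Finset.sum_apply]; exact Finset.sum_congr rfl fun s _ => rfl
    _ = ∑ s, Mᵀ j s * Mᵀ.cramer y s := by
        exact Finset.sum_congr rfl fun s _ => by rw [hc, transpose_apply, mul_comm]
    _ = (Mᵀ *ᵥ Mᵀ.cramer y) j := rfl
    _ = (M.det • y) j := hj

/-- Pair-replacement determinant identity. -/
private lemma my_pair_identity (M : Matrix (Fin d) (Fin d) ℤ) {i j : Fin d} (hij : i ≠ j)
    (u w : Fin d → ℤ) :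
    M.det * ((M.updateRow i u).updateRow j w).det
      = (M.updateRow i u).det * (M.updateRow j w).det
        - (M.updateRow j u).det * (M.updateRow i w).det := by
  classical
  set B := M.updateRow j w with hB
  have hE : (M.updateRow i u).updateRow j w = B.updateRow i u := my_updateRow_comm M hij u w
  have h1 : M.det * ((M.updateRow i u).updateRow j w).det
      = (B.updateRow i (M.det • u)).det := by
    rw [hE, det_updateRow_smul]
  rw [h1, ← my_sum_det_smul_rows M u]; refine (my_det_updateRow_sum_smul B i _ _).trans ?_
  have hterm : ∀ s : Fin d, (M.updateRow s u).det * (B.updateRow i (M s)).det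
      = (if s = i then (M.updateRow i u).det * (M.updateRow j w).det else 0)
        + (if s = j then -((M.updateRow j u).det * (M.updateRow i w).det) else 0) := by
    intro s
    rcases eq_or_ne s i with rfl | hsi
    · have : B.updateRow s (M s) = B := by
        have hBs : B s = M s := updateRow_ne hij
        rw [← hBs, updateRow_eq_self]
      rw [this, if_pos rfl, if_neg hij, add_zero, hB]
    · rcases eq_or_ne s j with rfl | hsj
      · have hswap : B.updateRow i (M s) = (M.updateRow i w).submatrix (Equiv.swap i s) id := by
          ext r k
          rcases eq_or_ne r i with rfl | hri
          · simp [Equiv.swap_apply_left, updateRow_ne (Ne.symm hij), updateRow_self]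
          · rcases eq_or_ne r s with rfl | hrs
            · simp [Equiv.swap_apply_right, updateRow_self, hB,
                updateRow_ne (Ne.symm hij), updateRow_ne hri]
            · simp [Equiv.swap_apply_of_ne_of_ne hri hrs, hB,
                updateRow_ne hri, updateRow_ne hrs]
        rw [hswap, Matrix.det_permute, Equiv.Perm.sign_swap hij]
        simp only [if_neg hsi, if_pos rfl, zero_add]
        push_cast
        ring
      · have hzero : (B.updateRow i (M s)).det = 0 := by
          apply det_zero_of_row_eq hsi.symm
          rw [updateRow_self, updateRow_ne hsi, hB, updateRow_ne hsj]
        rw [hzero, mul_zero, if_neg hsi, if_neg hsj, add_zero]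
  rw [Finset.sum_congr rfl (fun s _ => hterm s)]
  rw [Finset.sum_add_distrib, Finset.sum_ite_eq' Finset.univ i, Finset.sum_ite_eq' Finset.univ j]
  simp [sub_eq_add_neg]
  exact Or.inl rfl

end MatrixAux



private lemma my_rows_linearIndependent {d : ℕ} (T : Matrix (Fin d) (Fin d) ℤ)
    (hT : T.det ≠ 0) : LinearIndependent ℤ (fun i => T i) := by
  rw [Fintype.linearIndependent_iff]
  intro g hg i
  have h1 : (T.updateRow i (∑ s, g s • T s)).det = g i * T.det := by
    rw [Matrix.det_updateRow_sum]; rfl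
  rw [hg] at h1
  have h0 : (T.updateRow i (0 : Fin d → ℤ)).det = 0 :=
    det_eq_zero_of_row_eq_zero i (fun k => by simp)
  have := h0.symm.trans h1
  rcases mul_eq_zero.mp this.symm with h | h
  · exact h
  · exact absurd h hT

/-- The index of the subgroup generated by the rows of an integer matrix with
nonzero determinant equals the absolute value of the determinant. -/
private lemma my_index_span_rows {d : ℕ} (T : Matrix (Fin d) (Fin d) ℤ) (hT : T.det ≠ 0) :
    (Submodule.span ℤ (Set.range (fun i => T i))).toAddSubgroup.index = T.det.natAbs := by
  classical
  set NT := Submodule.span ℤ (Set.range (fun i => T i)) with hNT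
  have li : LinearIndependent ℤ (fun i => T i) := my_rows_linearIndependent T hT
  let bT : Module.Basis (Fin d) ℤ NT := Module.Basis.span li
  obtain ⟨n, snf⟩ := NT.smithNormalForm (Pi.basisFun ℤ (Fin d))
  have hn : n = d := by
    have e := bT.indexEquiv snf.bN
    simpa using (Fintype.card_congr e).symm
  subst hn
  -- index = ∏ |a i|
  have hidx : NT.toAddSubgroup.index = ∏ i, (snf.a i).natAbs := by
    rw [snf.toAddSubgroup_index_eq_pow_mul_prod]
    simp [Ideal.span_singleton_toAddSubgroup_eq_zmultiples, Int.index_zmultiples]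
  rw [hidx]
  -- now compute det T in terms of the a i
  set bPi : Module.Basis (Fin n) ℤ (Fin n → ℤ) := Pi.basisFun ℤ (Fin n) with hbPi
  have hσb : Function.Bijective snf.f := Finite.injective_iff_bijective.mp snf.f.injective
  set σ : Equiv.Perm (Fin n) := Equiv.ofBijective snf.f hσb with hσ
  set Agen : Matrix (Fin n) (Fin n) ℤ := Matrix.of (fun j k => if j = snf.f k then snf.a k else 0)
    with hAgen
  set R : Matrix (Fin n) (Fin n) ℤ := snf.bN.toMatrix bT with hR
  -- key factorization
  have hfact : bPi.toMatrix (fun i => T i)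
      = bPi.toMatrix ⇑snf.bM * (Agen * R) := by
    rw [← Module.Basis.toMatrix_mul_toMatrix bPi snf.bM (fun i => T i)]
    congr 1
    ext j i
    have hT_i : T i = (bT i : Fin n → ℤ) := congrArg Subtype.val (Module.Basis.span_apply li i).symm
    have hbT : (bT i : Fin n → ℤ) = ∑ k, R k i • (snf.bN k : Fin n → ℤ) := by
      conv_lhs => rw [← snf.bN.sum_toMatrix_smul_self bT i]
      push_cast
      rfl
    have hsnfk : ∀ k, (snf.bN k : Fin n → ℤ) = snf.a k • snf.bM (snf.f k) := snf.snf
    rw [Module.Basis.toMatrix_apply, hT_i, hbT]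
    simp_rw [hsnfk, smul_smul]
    rw [map_sum, Matrix.mul_apply]
    rw [Finsupp.finset_sum_apply]
    refine Finset.sum_congr rfl fun k _ => ?_
    rw [_root_.map_smul, Module.Basis.repr_self, Finsupp.smul_apply, Finsupp.single_apply, hAgen,
      of_apply]
    by_cases h : j = snf.f k
    · rw [if_pos h.symm, if_pos h]
      simp only [smul_eq_mul]
      ring
    · rw [if_neg (fun hh => h hh.symm), if_neg h]
      simp
  -- determinants
  have hXdet : (bPi.toMatrix (fun i => T i)).det = T.det := by
    have : bPi.toMatrix (fun i => T i) = Tᵀ := by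
      ext j i
      rw [Module.Basis.toMatrix_apply, hbPi, Pi.basisFun_repr, transpose_apply]
    rw [this, det_transpose]
  have hiff : ∀ j k, (j = snf.f k) ↔ (σ.symm j = k) := by
    intro j k
    rw [Equiv.symm_apply_eq]
    rfl
  have hAgendet : Agen = (Matrix.diagonal snf.a).submatrix σ.symm id := by
    ext j k
    rw [hAgen, of_apply, submatrix_apply, id, Matrix.diagonal_apply]
    by_cases h : j = snf.f k
    · rw [if_pos h, if_pos ((hiff j k).mp h), (hiff j k).mp h]
    · rw [if_neg h, if_neg (fun hh => h ((hiff j k).mpr hh))]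
  have hU1 : IsUnit (bPi.toMatrix ⇑snf.bM).det := by
    have := Module.Basis.invertibleToMatrix bPi snf.bM
    exact isUnit_iff_isUnit_det _ |>.mp (isUnit_of_invertible _)
  have hU2 : IsUnit R.det := by
    have := Module.Basis.invertibleToMatrix snf.bN bT
    exact isUnit_iff_isUnit_det _ |>.mp (isUnit_of_invertible _)
  have hdetT : T.det = (bPi.toMatrix ⇑snf.bM).det * ((Agen).det * R.det) := by
    rw [← hXdet, hfact, det_mul, det_mul]
  rw [hdetT]
  have hAg : Agen.det = ((Equiv.Perm.sign σ.symm : ℤˣ) : ℤ) * ∏ i, snf.a i := by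
    rw [hAgendet]
    rw [Matrix.det_permute, Matrix.det_diagonal]
    rfl
  rw [hAg]
  rw [Int.natAbs_mul, Int.natAbs_mul, Int.natAbs_mul]
  rw [Int.isUnit_iff_natAbs_eq.mp hU1, Int.isUnit_iff_natAbs_eq.mp hU2]
  have hsgn : (((Equiv.Perm.sign σ.symm : ℤˣ) : ℤ)).natAbs = 1 := by
    rcases Int.units_eq_one_or (Equiv.Perm.sign σ.symm) with h | h <;> rw [h] <;> rfl
  rw [hsgn]
  have hprod := map_prod Int.natAbsHom snf.a Finset.univ
  simp only [Int.natAbsHom_apply] at hprod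
  rw [hprod]
  ring



private lemma my_exists_nonzero_det {d : ℕ} (A : Finset (Fin d → ℤ))
    (hdim : affineSpan ℝ ((fun a : Fin d → ℤ => fun j => (a j : ℝ)) '' ↑A) = ⊤) :
    ∃ q : Fin (d + 1) → (Fin d → ℤ), (∀ k, q k ∈ A) ∧
      (Matrix.of fun i j : Fin d => (q i.succ j - q 0 j : ℤ)).det ≠ 0 := by
  classical
  set g : (Fin d → ℤ) → (Fin d → ℝ) := fun a => fun j => (a j : ℝ) with hg
  obtain ⟨t, hts, htspan, htind⟩ := exists_affineIndependent ℝ (Fin d → ℝ) (g '' ↑A)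
  rw [hdim] at htspan
  have tfin : t.Finite := (A.finite_toSet.image g).subset hts
  haveI : Fintype t := tfin.fintype
  haveI : Nonempty t := (AffineSubspace.nonempty_of_affineSpan_eq_top ℝ (Fin d → ℝ) _
    htspan).to_subtype
  have hvs : vectorSpan ℝ t = ⊤ := by
    rw [← direction_affineSpan, htspan, AffineSubspace.direction_top]
  have hcard : Fintype.card t = d + 1 := by
    have h1 := htind.finrank_vectorSpan_add_one
    rw [Subtype.range_coe, hvs] at h1
    rw [← h1]
    congr 1
    rw [finrank_top]
    simp [Module.finrank_pi]
  set e : Fin (d + 1) ≃ t := (Fintype.equivFinOfCardEq hcard).symm with he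
  set q' : Fin (d + 1) → (Fin d → ℝ) := fun i => (e i : Fin d → ℝ) with hq'
  have hq'ind : AffineIndependent ℝ q' := htind.comp_embedding e.toEmbedding
  have hmem : ∀ i, ∃ a, a ∈ A ∧ g a = q' i := by
    intro i
    rcases hts (e i).2 with ⟨a, ha, hga⟩
    exact ⟨a, ha, hga⟩
  choose q hqA hq using hmem
  refine ⟨q, hqA, ?_⟩
  have li := (affineIndependent_iff_linearIndependent_vsub ℝ q' 0).mp hq'ind
  have li2 : LinearIndependent ℝ (fun i : Fin d => q' i.succ - q' 0) := by
    have hinj : Function.Injective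
        (fun i : Fin d => (⟨i.succ, Fin.succ_ne_zero i⟩ : {x : Fin (d+1) // x ≠ 0})) := by
      intro i j h
      exact Fin.succ_injective _ (congrArg Subtype.val h)
    have := li.comp _ hinj
    exact this
  set W : Matrix (Fin d) (Fin d) ℝ := Matrix.of (fun i j => q' i.succ j - q' 0 j) with hW
  have liW : LinearIndependent ℝ (fun i => W i) := by
    exact li2
  have hWu : IsUnit W := Matrix.linearIndependent_rows_iff_isUnit.mp liW
  have hWdet : W.det ≠ 0 := (Matrix.isUnit_iff_isUnit_det W |>.mp hWu).ne_zero
  have hWcast : W = (Matrix.of fun i j : Fin d => (q i.succ j - q 0 j : ℤ)).map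
      (Int.cast : ℤ → ℝ) := by
    ext i j
    simp only [hW, of_apply, Matrix.map_apply]
    rw [← hq i.succ, ← hq 0]
    push_cast
    rfl
  intro hcontra
  apply hWdet
  rw [hWcast]
  rw [show ((Matrix.of fun i j : Fin d => (q i.succ j - q 0 j : ℤ)).map (Int.cast : ℤ → ℝ))
      = (Int.castRingHom ℝ).mapMatrix (Matrix.of fun i j : Fin d => (q i.succ j - q 0 j : ℤ))
      from rfl]
  rw [← RingHom.map_det, hcontra]
  simp



section Part4
variable {d : ℕ}

/-- The central counting bound. -/
private lemma my_card_le (A : Finset (Fin d → ℤ))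
    (P : Fin (d + 1) → (Fin d → ℤ)) (hPA : ∀ k, P k ∈ A)
    (hmax : ∀ q : Fin (d + 1) → (Fin d → ℤ), (∀ k, q k ∈ A) →
      ((Matrix.of fun i j : Fin d => q i.succ j - q 0 j).det).natAbs ≤
        ((Matrix.of fun i j : Fin d => P i.succ j - P 0 j).det).natAbs)
    (hD : (Matrix.of fun i j : Fin d => P i.succ j - P 0 j).det ≠ 0) :
    A.card ≤ 2 * (2 ^ d * ((Matrix.of fun i j : Fin d => P i.succ j - P 0 j).det).natAbs) := by
  classical
  set M : Matrix (Fin d) (Fin d) ℤ := Matrix.of fun i j : Fin d => P i.succ j - P 0 j with hM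
  set D : ℤ := M.det with hDdef
  set Dn : ℕ := D.natAbs with hDn
  have hDn1 : 1 ≤ Dn := Int.natAbs_pos.mpr hD
  set Npt : (Fin d → ℤ) → Fin d → ℤ := fun x i => (M.updateRow i (x - P 0)).det with hNpt
  -- single replacement bound
  have hsingle : ∀ a ∈ A, ∀ i : Fin d, (Npt a i).natAbs ≤ Dn := by
    intro a ha i
    have hq : ∀ k, Function.update P i.succ a k ∈ A := by
      intro k
      rcases eq_or_ne k i.succ with rfl | hk
      · rw [Function.update_self]; exact ha
      · rw [Function.update_of_ne hk]; exact hPA k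
    have h := hmax _ hq
    have hmat : (Matrix.of fun r j : Fin d =>
        Function.update P i.succ a r.succ j - Function.update P i.succ a 0 j)
        = M.updateRow i (a - P 0) := by
      ext r j
      rw [Function.update_of_ne (Ne.symm (Fin.succ_ne_zero i))]
      rcases eq_or_ne r i with rfl | hr
      · rw [of_apply, Function.update_self, updateRow_self]
        rfl
      · rw [of_apply, Function.update_of_ne (by simpa [Fin.succ_inj] using hr),
          updateRow_ne hr]
        rfl
    rw [hmat] at h
    exact h
  -- pair replacement bound
  have hpairdet : ∀ a ∈ A, ∀ b ∈ A, ∀ {i j : Fin d}, i ≠ j →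
      (((M.updateRow i (a - P 0)).updateRow j (b - P 0)).det).natAbs ≤ Dn := by
    intro a ha b hb i j hij
    have hq : ∀ k, Function.update (Function.update P i.succ a) j.succ b k ∈ A := by
      intro k
      rcases eq_or_ne k j.succ with rfl | hk1
      · rw [Function.update_self]; exact hb
      · rw [Function.update_of_ne hk1]
        rcases eq_or_ne k i.succ with rfl | hk2
        · rw [Function.update_self]; exact ha
        · rw [Function.update_of_ne hk2]; exact hPA k
    have h := hmax _ hq
    have hmat : (Matrix.of fun r l : Fin d =>
        Function.update (Function.update P i.succ a) j.succ b r.succ l -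
          Function.update (Function.update P i.succ a) j.succ b 0 l)
        = (M.updateRow i (a - P 0)).updateRow j (b - P 0) := by
      ext r l
      rw [Function.update_of_ne (Ne.symm (Fin.succ_ne_zero j)),
        Function.update_of_ne (Ne.symm (Fin.succ_ne_zero i))]
      rcases eq_or_ne r j with rfl | hrj
      · rw [of_apply, Function.update_self, updateRow_self]
        rfl
      · rw [of_apply, Function.update_of_ne (by simpa [Fin.succ_inj] using hrj),
          updateRow_ne hrj]
        rcases eq_or_ne r i with rfl | hri
        · rw [Function.update_self, updateRow_self]
          rfl
        · rw [Function.update_of_ne (by simpa [Fin.succ_inj] using hri), updateRow_ne hri]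
          rfl
    rw [hmat] at h
    exact h
  have hminor : ∀ a ∈ A, ∀ b ∈ A, ∀ {i j : Fin d}, i ≠ j →
      (Npt a i * Npt b j - Npt a j * Npt b i).natAbs ≤ Dn * Dn := by
    intro a ha b hb i j hij
    have hid := my_pair_identity M hij (a - P 0) (b - P 0)
    have : (Npt a i * Npt b j - Npt a j * Npt b i).natAbs
        = Dn * (((M.updateRow i (a - P 0)).updateRow j (b - P 0)).det).natAbs := by
      rw [← hid]
      rw [Int.natAbs_mul]
    rw [this]
    exact Nat.mul_le_mul_left Dn (hpairdet a ha b hb hij)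
  -- injectivity of Npt
  have hNinj : ∀ x y : Fin d → ℤ, Npt x = Npt y → x = y := by
    intro x y hxy
    have h1 := my_sum_det_smul_rows M (x - P 0)
    have h2 := my_sum_det_smul_rows M (y - P 0)
    have h3 : D • (x - P 0) = D • (y - P 0) := by
      rw [← h1, ← h2]
      exact Finset.sum_congr rfl fun s _ => by rw [show (M.updateRow s (x - P 0)).det = Npt x s from rfl, show (M.updateRow s (y - P 0)).det = Npt y s from rfl, hxy]
    have h4 : x - P 0 = y - P 0 := by
      funext j
      have := congrFun h3 j
      simp only [Pi.smul_apply, smul_eq_mul] at this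
      exact mul_left_cancel₀ hD this
    have := congrFun h4
    funext j
    have hj := this j
    simp only [Pi.sub_apply] at hj
    omega
  -- the lattice
  set Λ : Submodule ℤ (Fin d → ℤ) := Submodule.span ℤ (Set.range (fun s => ((2 : ℤ) • M) s))
    with hΛ
  have hcong : ∀ x y : Fin d → ℤ, x - y ∈ Λ → ∀ i, ∃ m : ℤ, Npt x i - Npt y i = 2 * D * m := by
    intro x y hxy i
    rw [hΛ, Submodule.mem_span_range_iff_exists_fun] at hxy
    obtain ⟨cc, hcc⟩ := hxy
    refine ⟨cc i, ?_⟩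
    have hrow : (x - P 0) = (x - y) + (y - P 0) := by abel
    have h1 : Npt x i = (M.updateRow i (x - y)).det + Npt y i := by
      rw [hNpt]
      simp only
      rw [hrow, det_updateRow_add]
    have h2 : (M.updateRow i (x - y)).det = 2 * D * cc i := by
      rw [← hcc]
      have : (∑ s, cc s • ((2 : ℤ) • M) s) = ∑ s, (cc s * 2) • M s := by
        refine Finset.sum_congr rfl fun s _ => ?_
        funext k
        simp only [Pi.smul_apply, Matrix.smul_apply, smul_eq_mul]
        ring
      rw [this, Matrix.det_updateRow_sum]
      simp only [smul_eq_mul]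
      ring
    rw [h1, h2]
    ring
  -- dichotomy for a pair in the same class
  have hdich : ∀ x ∈ A, ∀ y ∈ A, x - y ∈ Λ → ∀ i,
      Npt x i = Npt y i ∨
        (Npt x i = -Npt y i ∧ (Npt x i).natAbs = Dn ∧ (Npt y i).natAbs = Dn) := by
    intro x hx y hy hxy i
    obtain ⟨m, hm⟩ := hcong x y hxy i
    rcases eq_or_ne m 0 with rfl | hm0
    · left
      have : Npt x i - Npt y i = 0 := by rw [hm]; ring
      omega
    · right
      have habs : (Npt x i - Npt y i).natAbs = 2 * Dn * m.natAbs := by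
        rw [hm, Int.natAbs_mul, Int.natAbs_mul]
        rfl
      have hmn : 1 ≤ m.natAbs := Int.natAbs_pos.mpr hm0
      have g1 : 2 * Dn ≤ (Npt x i - Npt y i).natAbs := by
        rw [habs]
        calc 2 * Dn = 2 * Dn * 1 := by ring
          _ ≤ 2 * Dn * m.natAbs := Nat.mul_le_mul_left _ hmn
      have g2 : (Npt x i - Npt y i).natAbs ≤ (Npt x i).natAbs + (Npt y i).natAbs :=
        Int.natAbs_sub_le _ _
      have hux := hsingle x hx i
      have huy := hsingle y hy i
      have hxDn : (Npt x i).natAbs = Dn := by omega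
      have hyDn : (Npt y i).natAbs = Dn := by omega
      refine ⟨?_, hxDn, hyDn⟩
      have heq : (Npt x i).natAbs = (Npt y i).natAbs := by omega
      rcases Int.natAbs_eq_natAbs_iff.mp heq with h | h
      · exfalso
        rw [h] at hm
        have : 2 * D * m = 0 := by omega
        rcases mul_eq_zero.mp this with h' | h'
        · rcases mul_eq_zero.mp h' with h'' | h''
          · norm_num at h''
          · exact hD h''
        · exact hm0 h'
      · exact h
  -- key contradiction: equal extreme coordinate in a class pair
  have hK : ∀ x ∈ A, ∀ y ∈ A, x ≠ y → x - y ∈ Λ → ∀ i,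
      Npt x i = Npt y i → (Npt x i).natAbs = Dn → False := by
    intro x hx y hy hne hxy i heq habs
    have hNne : Npt x ≠ Npt y := fun h => hne (hNinj x y h)
    obtain ⟨j, hj⟩ := Function.ne_iff.mp hNne
    have hji : j ≠ i := fun h => hj (h ▸ heq)
    rcases hdich x hx y hy hxy j with h | ⟨hopp, hxj, hyj⟩
    · exact hj h
    · have hb := hminor x hx y hy hji
      have hyj' : Npt y j = -Npt x j := by omega
      have hval2 : Npt x j * Npt y i - Npt x i * Npt y j = 2 * (Npt x j * Npt x i) := by
        rw [← heq, hyj']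
        ring
      rw [hval2, Int.natAbs_mul, Int.natAbs_mul, hxj, habs] at hb
      have h2 : (2 : ℤ).natAbs = 2 := rfl
      rw [h2] at hb
      nlinarith [hDn1]
  -- index of the lattice
  have hdet2 : ((2 : ℤ) • M).det = 2 ^ d * D := by
    rw [Matrix.det_smul]
    simp
    rfl
  have hdet2ne : ((2 : ℤ) • M).det ≠ 0 := by
    rw [hdet2]
    exact mul_ne_zero (by positivity) hD
  have hidx : Λ.toAddSubgroup.index = 2 ^ d * Dn := by
    rw [hΛ, my_index_span_rows _ hdet2ne, hdet2, Int.natAbs_mul]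
    congr 1
  -- pigeonhole
  by_contra hcard
  push_neg at hcard
  set Q := (Fin d → ℤ) ⧸ Λ.toAddSubgroup with hQ
  have hQcard : Nat.card Q = 2 ^ d * Dn := hidx
  have hQfin : Finite Q := by
    have : Nat.card Q ≠ 0 := by
      rw [hQcard]
      positivity
    exact (Nat.card_ne_zero.mp this).2
  haveI := hQfin
  haveI : Fintype Q := Fintype.ofFinite Q
  have hmaps : ∀ a ∈ A, (QuotientAddGroup.mk a : Q) ∈ (Finset.univ : Finset Q) :=
    fun a _ => Finset.mem_univ _
  have hlt : (Finset.univ : Finset Q).card * 2 < A.card := by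
    have : (Finset.univ : Finset Q).card = 2 ^ d * Dn := by
      rw [Finset.card_univ, ← Nat.card_eq_fintype_card, hQcard]
    rw [this]
    omega
  obtain ⟨yq, -, hfib⟩ := Finset.exists_lt_card_fiber_of_mul_lt_card_of_maps_to hmaps hlt
  obtain ⟨a, b, c, ha, hb, hc, hab, hac, hbc⟩ := Finset.two_lt_card_iff.mp hfib
  simp only [Finset.mem_filter] at ha hb hc
  have hmem : ∀ x y : Fin d → ℤ, (QuotientAddGroup.mk x : Q) = QuotientAddGroup.mk y →
      x - y ∈ Λ := by
    intro x y hxy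
    have := (QuotientAddGroup.eq_iff_sub_mem).mp hxy
    exact this
  have hab' : a - b ∈ Λ := hmem a b (ha.2.trans hb.2.symm)
  have hac' : a - c ∈ Λ := hmem a c (ha.2.trans hc.2.symm)
  have hbc' : b - c ∈ Λ := hmem b c (hb.2.trans hc.2.symm)
  -- derive contradiction
  have hNab : Npt a ≠ Npt b := fun h => hab (hNinj a b h)
  obtain ⟨i0, hi0⟩ := Function.ne_iff.mp hNab
  rcases hdich a ha.1 b hb.1 hab' i0 with h | ⟨hopp, haD, hbD⟩
  · exact hi0 h
  rcases hdich a ha.1 c hc.1 hac' i0 with h | ⟨hopp2, _, hcD⟩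
  · exact hK a ha.1 c hc.1 hac hac' i0 h haD
  · -- Npt c i0 = -Npt a i0 = Npt b i0
    have : Npt b i0 = Npt c i0 := by
      have h1 : Npt c i0 = -Npt a i0 := by omega
      omega
    exact hK b hb.1 c hc.1 hbc hbc' i0 this hbD
end Part4



theorem stmt_10 (d : ℕ) (A : Finset (Fin d → ℤ))
    (hdim : affineSpan ℝ ((fun a : Fin d → ℤ => fun j => (a j : ℝ)) '' ↑A) = ⊤) :
    ∃ p : Fin (d + 1) → (Fin d → ℤ), (∀ i, p i ∈ A) ∧ Function.Injective p ∧
      (A.card : ℝ) / (2 ^ d * (Nat.factorial (d + 1))) ≤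
        |Matrix.det (Matrix.of fun i j : Fin d => ((p i.succ j - p 0 j : ℤ) : ℝ))| /
          (Nat.factorial d) := by
  classical
  obtain ⟨q0, hq0A, hq0det⟩ := my_exists_nonzero_det A hdim
  rcases Nat.eq_zero_or_pos d with rfl | hd
  · -- d = 0
    refine ⟨fun _ => q0 0, fun _ => hq0A 0,
      fun x y _ => by
        rw [Fin.ext_iff]
        have hx := x.isLt
        have hy := y.isLt
        omega, ?_⟩
    have hcard : A.card ≤ 1 := by
      refine Finset.card_le_one.mpr fun a _ b _ => ?_
      funext j
      exact absurd j.2 (by omega)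
    rw [Matrix.det_isEmpty]
    simp only [Nat.factorial, pow_zero, Nat.cast_one, one_mul, abs_one]
    norm_num
    exact_mod_cast hcard
  · -- d ≥ 1
    haveI : Nonempty {x // x ∈ A} := ⟨⟨q0 0, hq0A 0⟩⟩
    set f : (Fin (d + 1) → {x // x ∈ A}) → ℕ := fun σ =>
      ((Matrix.of fun i j : Fin d => (σ i.succ : Fin d → ℤ) j - (σ 0 : Fin d → ℤ) j).det).natAbs
      with hf
    obtain ⟨σmax, -, hσmax⟩ := Finset.exists_max_image Finset.univ f ⟨Classical.arbitrary _,
      Finset.mem_univ _⟩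
    set P : Fin (d + 1) → (Fin d → ℤ) := fun k => (σmax k : Fin d → ℤ) with hP
    have hPA : ∀ k, P k ∈ A := fun k => (σmax k).2
    set M : Matrix (Fin d) (Fin d) ℤ := Matrix.of fun i j : Fin d => P i.succ j - P 0 j with hM
    have hmax : ∀ q : Fin (d + 1) → (Fin d → ℤ), (∀ k, q k ∈ A) →
        ((Matrix.of fun i j : Fin d => q i.succ j - q 0 j).det).natAbs ≤ M.det.natAbs := by
      intro q hq
      have := hσmax (fun k => ⟨q k, hq k⟩) (Finset.mem_univ _)
      exact this
    have hDn1 : 1 ≤ M.det.natAbs := by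
      have h0 := hmax q0 hq0A
      have : 1 ≤ ((Matrix.of fun i j : Fin d => q0 i.succ j - q0 0 j).det).natAbs :=
        Int.natAbs_pos.mpr hq0det
      omega
    have hD : M.det ≠ 0 := by
      intro h
      rw [hM] at hDn1
      rw [h] at hDn1
      simp at hDn1
    have hcount := my_card_le A P hPA hmax hD
    have hinj : Function.Injective P := by
      intro k l hkl
      by_contra hne
      apply hD
      rcases Fin.eq_zero_or_eq_succ k with rfl | ⟨i, rfl⟩
      · rcases Fin.eq_zero_or_eq_succ l with rfl | ⟨j, rfl⟩
        · exact absurd rfl hne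
        · exact det_eq_zero_of_row_eq_zero j (fun m => by
            rw [hM]; simp only [of_apply]; rw [← hkl]; ring)
      · rcases Fin.eq_zero_or_eq_succ l with rfl | ⟨j, rfl⟩
        · exact det_eq_zero_of_row_eq_zero i (fun m => by
            rw [hM]; simp only [of_apply]; rw [hkl]; ring)
        · have hij : i ≠ j := fun h => hne (by rw [h])
          refine det_zero_of_row_eq hij ?_
          funext m
          rw [hM]
          simp only [of_apply]
          rw [hkl]
    refine ⟨P, hPA, hinj, ?_⟩
    have hcast : (Matrix.of fun i j : Fin d => ((P i.succ j - P 0 j : ℤ) : ℝ)).det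
        = ((M.det : ℤ) : ℝ) := by
      rw [show (Matrix.of fun i j : Fin d => ((P i.succ j - P 0 j : ℤ) : ℝ))
          = (Int.castRingHom ℝ).mapMatrix M from rfl, ← RingHom.map_det]
      rfl
    rw [hcast]
    have habs : |((M.det : ℤ) : ℝ)| = (M.det.natAbs : ℝ) := by
      rw [Nat.cast_natAbs, Int.cast_abs]
    rw [habs]
    -- arithmetic
    have hnat : A.card * Nat.factorial d ≤ M.det.natAbs * (2 ^ d * Nat.factorial (d + 1)) := by
      calc A.card * Nat.factorial d ≤ (2 * (2 ^ d * M.det.natAbs)) * Nat.factorial d :=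
            Nat.mul_le_mul_right _ hcount
        _ ≤ ((d + 1) * (2 ^ d * M.det.natAbs)) * Nat.factorial d := by
            have : 2 ≤ d + 1 := by omega
            exact Nat.mul_le_mul_right _ (Nat.mul_le_mul_right _ this)
        _ = M.det.natAbs * (2 ^ d * ((d + 1) * Nat.factorial d)) := by ring
        _ = M.det.natAbs * (2 ^ d * Nat.factorial (d + 1)) := by
            rw [Nat.factorial_succ]
    have hpos1 : (0 : ℝ) < 2 ^ d * (Nat.factorial (d + 1)) := by positivity
    have hpos2 : (0 : ℝ) < (Nat.factorial d : ℝ) := by positivity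
    rw [div_le_div_iff₀ hpos1 hpos2]
    calc (A.card : ℝ) * (Nat.factorial d : ℝ)
        = ((A.card * Nat.factorial d : ℕ) : ℝ) := by push_cast; ring
      _ ≤ ((M.det.natAbs * (2 ^ d * Nat.factorial (d + 1)) : ℕ) : ℝ) := by
          exact_mod_cast hnat
      _ = (M.det.natAbs : ℝ) * (2 ^ d * (Nat.factorial (d + 1))) := by push_cast; ring
end

section
/- Let A be a subset of a box Q in ℤ^d with widths w_1, ..., w_d and 0 ∈ A. Then for every point z in the zonotope Z_A (the Minkowski sum of segments [0,1]·a over a ∈ A), there exists a subset sum s(z) ∈ Σ(A) = {Σ_{s∈S} s : S ⊆ A} such that |z_i − s(z)_i| ≤ √(d·|A|)·w_i for every coordinate i ≤ d. -/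
open Finset

lemma aux_sum_powerset {α : Type*} [DecidableEq α] (A : Finset α) (f g : α → ℝ) :
    ∑ S ∈ A.powerset, ∏ a ∈ A, (if a ∈ S then f a else g a) = ∏ a ∈ A, (f a + g a) := by
  rw [Finset.prod_add]
  refine Finset.sum_congr rfl fun S hS => ?_
  rw [Finset.mem_powerset] at hS
  conv_lhs => rw [show A = S ∪ (A \ S) from (Finset.union_sdiff_of_subset hS).symm]
  rw [Finset.prod_union Finset.disjoint_sdiff]
  congr 1
  · exact Finset.prod_congr rfl fun a ha => if_pos ha
  · exact Finset.prod_congr rfl fun a ha => if_neg (Finset.mem_sdiff.1 ha).2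

lemma aux_covvar {α : Type*} [DecidableEq α] (A : Finset α) (t : α → ℝ) {a b : α}
    (ha : a ∈ A) (hb : b ∈ A) :
    ∑ S ∈ A.powerset, (∏ c ∈ A, (if c ∈ S then t c else 1 - t c)) *
      ((t a - (if a ∈ S then (1:ℝ) else 0)) * (t b - (if b ∈ S then (1:ℝ) else 0)))
    = if a = b then t a * (1 - t a) else 0 := by
  have hrepr : ∀ (S : Finset α) (x : α), x ∈ A →
      (t x - (if x ∈ S then (1:ℝ) else 0)) =
      ∏ c ∈ A, (if c ∈ S then (if c = x then t x - 1 else 1)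
                 else (if c = x then t x else 1)) := by
    intro S x hx
    rw [Finset.prod_eq_single x ?h1 ?h2]
    · simp only [if_pos rfl]
      split_ifs <;> ring
    case h1 => intro c _ hcx; simp [hcx]
    case h2 => intro h; exact absurd hx h
  have hint : ∀ S : Finset α,
      (∏ c ∈ A, (if c ∈ S then t c else 1 - t c)) *
        ((t a - (if a ∈ S then (1:ℝ) else 0)) * (t b - (if b ∈ S then (1:ℝ) else 0))) =
      ∏ c ∈ A, (if c ∈ S then t c * (if c = a then t a - 1 else 1) * (if c = b then t b - 1 else 1)
                 else (1 - t c) * (if c = a then t a else 1) * (if c = b then t b else 1)) := by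
    intro S
    rw [hrepr S a ha, hrepr S b hb, ← Finset.prod_mul_distrib, ← Finset.prod_mul_distrib]
    exact Finset.prod_congr rfl fun c _ => by split_ifs <;> ring
  rw [Finset.sum_congr rfl fun S _ => hint S, aux_sum_powerset]
  by_cases hab : a = b
  · subst hab
    rw [if_pos rfl, Finset.prod_eq_single a ?g1 ?g2]
    · split_ifs with h <;> (first | ring1 | exact absurd rfl h)
    case g1 => intro c _ hca; simp [hca]
    case g2 => intro h; exact absurd ha h
  · rw [if_neg hab]
    apply Finset.prod_eq_zero ha
    split_ifs with h1 <;> (first | ring1 | simp_all)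

theorem stmt_12 (d : ℕ) (lo hi : Fin d → ℤ) (A : Finset (Fin d → ℤ))
    (hbox : ∀ a ∈ A, ∀ i, lo i ≤ a i ∧ a i ≤ hi i)
    (h0 : (0 : Fin d → ℤ) ∈ A)
    (z : Fin d → ℝ)
    (hz : ∃ t : (Fin d → ℤ) → ℝ, (∀ a, 0 ≤ t a ∧ t a ≤ 1) ∧
      ∀ i, z i = ∑ a ∈ A, t a * (a i : ℝ)) :
    ∃ B ⊆ A, ∀ i, |z i - ((∑ a ∈ B, a i : ℤ) : ℝ)| ≤
      Real.sqrt (d * A.card) * ((hi i - lo i + 1 : ℤ) : ℝ) := by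
  obtain ⟨t, ht01, hzt⟩ := hz
  rcases Nat.eq_zero_or_pos d with hd | hd
  · subst hd
    exact ⟨∅, Finset.empty_subset A, fun i => i.elim0⟩
  -- notation
  set W : Fin d → ℝ := fun i => ((hi i - lo i + 1 : ℤ) : ℝ) with hWdef
  have hlohi : ∀ i, lo i ≤ 0 ∧ 0 ≤ hi i := by
    intro i; simpa using hbox 0 h0 i
  have hW1 : ∀ i, (1:ℝ) ≤ W i := by
    intro i
    have := (hlohi i).1; have := (hlohi i).2
    have h : (1:ℤ) ≤ hi i - lo i + 1 := by omega
    show (1:ℝ) ≤ ((hi i - lo i + 1 : ℤ) : ℝ)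
    exact_mod_cast h
  have hWpos : ∀ i, (0:ℝ) < W i := fun i => lt_of_lt_of_le one_pos (hW1 i)
  have ha2 : ∀ a ∈ A, ∀ i, ((a i : ℝ))^2 ≤ W i ^ 2 := by
    intro a ha i
    have h1 := (hbox a ha i).1
    have h2 := (hbox a ha i).2
    have := (hlohi i).1; have := (hlohi i).2
    have h : (a i)^2 ≤ (hi i - lo i + 1)^2 := by nlinarith
    show ((a i : ℝ))^2 ≤ ((hi i - lo i + 1 : ℤ) : ℝ)^2
    exact_mod_cast h
  set w : Finset (Fin d → ℤ) → ℝ := fun S => ∏ a ∈ A, (if a ∈ S then t a else 1 - t a)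
    with hwdef
  have hw0 : ∀ S, 0 ≤ w S := by
    intro S
    apply Finset.prod_nonneg
    intro a _
    split_ifs
    · exact (ht01 a).1
    · linarith [(ht01 a).2]
  have hw1 : ∑ S ∈ A.powerset, w S = 1 := by
    rw [hwdef]
    rw [aux_sum_powerset]
    simp
  -- error representation
  have herr : ∀ S ∈ A.powerset, ∀ i, z i - ∑ a ∈ S, (a i : ℝ) =
      ∑ a ∈ A, (t a - (if a ∈ S then (1:ℝ) else 0)) * (a i : ℝ) := by
    intro S hS i
    rw [Finset.mem_powerset] at hS
    have h1 : ∑ a ∈ S, (a i : ℝ) = ∑ a ∈ A, (if a ∈ S then (1:ℝ) else 0) * (a i : ℝ) := by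
      symm
      calc ∑ a ∈ A, (if a ∈ S then (1:ℝ) else 0) * (a i : ℝ)
          = ∑ a ∈ A, (if a ∈ S then ((a i : ℝ)) else 0) :=
            Finset.sum_congr rfl fun a _ => by split_ifs <;> ring
        _ = ∑ a ∈ A ∩ S, ((a i : ℝ)) := Finset.sum_ite_mem _ _ _
        _ = ∑ a ∈ S, ((a i : ℝ)) := by rw [Finset.inter_eq_right.2 hS]
    rw [hzt i, h1, ← Finset.sum_sub_distrib]
    exact Finset.sum_congr rfl fun a _ => by ring
  -- second moment
  have Evar : ∀ i, ∑ S ∈ A.powerset, w S * (z i - ∑ a ∈ S, (a i : ℝ))^2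
      = ∑ a ∈ A, (a i : ℝ)^2 * (t a * (1 - t a)) := by
    intro i
    have step1 : ∀ S ∈ A.powerset,
        w S * (z i - ∑ a ∈ S, (a i : ℝ))^2 =
        ∑ a ∈ A, ∑ b ∈ A, (a i : ℝ) * (b i : ℝ) *
          (w S * ((t a - (if a ∈ S then (1:ℝ) else 0)) * (t b - (if b ∈ S then (1:ℝ) else 0)))) := by
      intro S hS
      rw [herr S hS i, sq, Finset.sum_mul_sum, Finset.mul_sum]
      refine Finset.sum_congr rfl fun a _ => ?_
      rw [Finset.mul_sum]
      exact Finset.sum_congr rfl fun b _ => by ring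
    rw [Finset.sum_congr rfl step1, Finset.sum_comm]
    refine Finset.sum_congr rfl fun a ha => ?_
    rw [Finset.sum_comm]
    have inner : ∀ b ∈ A, ∑ S ∈ A.powerset, (a i : ℝ) * (b i : ℝ) *
          (w S * ((t a - (if a ∈ S then (1:ℝ) else 0)) * (t b - (if b ∈ S then (1:ℝ) else 0))))
        = (a i : ℝ) * (b i : ℝ) * (if a = b then t a * (1 - t a) else 0) := by
      intro b hb
      rw [← Finset.mul_sum, aux_covvar A t ha hb]
    rw [Finset.sum_congr rfl inner]
    simp only [mul_ite, mul_zero]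
    rw [Finset.sum_ite_eq A a (fun b => (a i : ℝ) * (b i : ℝ) * (t a * (1 - t a))), if_pos ha]
    ring
  have Ebound : ∀ i, ∑ S ∈ A.powerset, w S * (z i - ∑ a ∈ S, (a i : ℝ))^2
      ≤ (A.card : ℝ) * W i ^ 2 / 4 := by
    intro i
    rw [Evar i]
    have : ∀ a ∈ A, (a i : ℝ)^2 * (t a * (1 - t a)) ≤ W i ^ 2 / 4 := by
      intro a ha
      have h1 := ha2 a ha i
      have h2 := (ht01 a).1
      have h3 := (ht01 a).2
      nlinarith [sq_nonneg ((a i : ℝ)), sq_nonneg (t a - 1/2), hWpos i]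
    calc ∑ a ∈ A, (a i : ℝ)^2 * (t a * (1 - t a)) ≤ ∑ a ∈ A, W i ^ 2 / 4 :=
          Finset.sum_le_sum this
      _ = (A.card : ℝ) * W i ^ 2 / 4 := by rw [Finset.sum_const, nsmul_eq_mul]; ring
  have hcard : (1:ℝ) ≤ A.card := by
    have : 0 < A.card := Finset.card_pos.2 ⟨0, h0⟩
    exact_mod_cast this
  have hdpos : (1:ℝ) ≤ d := by exact_mod_cast hd
  -- there exists a good S
  have hexist : ∃ S ∈ A.powerset,
      ∑ i, (z i - ∑ a ∈ S, (a i : ℝ))^2 / W i ^ 2 < (d : ℝ) * A.card := by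
    by_contra hcon
    push_neg at hcon
    have hlow : (d:ℝ) * A.card = ((d:ℝ) * A.card) * ∑ S ∈ A.powerset, w S := by
      rw [hw1, mul_one]
    have h1 : ((d:ℝ) * A.card) * ∑ S ∈ A.powerset, w S
        ≤ ∑ S ∈ A.powerset, w S * ∑ i, (z i - ∑ a ∈ S, (a i : ℝ))^2 / W i ^ 2 := by
      rw [Finset.mul_sum]
      refine Finset.sum_le_sum fun S hS => ?_
      calc (d:ℝ) * A.card * w S = w S * ((d:ℝ) * A.card) := by ring
        _ ≤ w S * ∑ i, (z i - ∑ a ∈ S, (a i : ℝ))^2 / W i ^ 2 :=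
            mul_le_mul_of_nonneg_left (hcon S hS) (hw0 S)
    have h2 : ∑ S ∈ A.powerset, w S * ∑ i, (z i - ∑ a ∈ S, (a i : ℝ))^2 / W i ^ 2
        = ∑ i, (∑ S ∈ A.powerset, w S * (z i - ∑ a ∈ S, (a i : ℝ))^2) / W i ^ 2 := by
      calc ∑ S ∈ A.powerset, w S * ∑ i, (z i - ∑ a ∈ S, (a i : ℝ))^2 / W i ^ 2
          = ∑ S ∈ A.powerset, ∑ i, w S * ((z i - ∑ a ∈ S, (a i : ℝ))^2 / W i ^ 2) :=
            Finset.sum_congr rfl fun S _ => Finset.mul_sum _ _ _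
        _ = ∑ i, ∑ S ∈ A.powerset, w S * ((z i - ∑ a ∈ S, (a i : ℝ))^2 / W i ^ 2) :=
            Finset.sum_comm
        _ = ∑ i, (∑ S ∈ A.powerset, w S * (z i - ∑ a ∈ S, (a i : ℝ))^2) / W i ^ 2 := by
            refine Finset.sum_congr rfl fun i _ => ?_
            rw [Finset.sum_div]
            exact Finset.sum_congr rfl fun S _ => (mul_div_assoc _ _ _).symm
    have h3 : ∑ i, (∑ S ∈ A.powerset, w S * (z i - ∑ a ∈ S, (a i : ℝ))^2) / W i ^ 2
        ≤ ∑ i : Fin d, ((A.card : ℝ) * W i ^ 2 / 4) / W i ^ 2 := by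
      refine Finset.sum_le_sum fun i _ => ?_
      exact div_le_div_of_nonneg_right (Ebound i) (pow_pos (hWpos i) 2).le
    have h4 : ∑ i : Fin d, ((A.card : ℝ) * W i ^ 2 / 4) / W i ^ 2 = (d:ℝ) * A.card / 4 := by
      have : ∀ i : Fin d, ((A.card : ℝ) * W i ^ 2 / 4) / W i ^ 2 = (A.card : ℝ) / 4 := by
        intro i
        have hne : W i ≠ 0 := (hWpos i).ne'
        rw [div_eq_div_iff (pow_ne_zero 2 hne) (by norm_num)]
        ring
      rw [Finset.sum_congr rfl fun i _ => this i, Finset.sum_const, nsmul_eq_mul]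
      simp [Finset.card_univ]
      ring
    have hN : (1:ℝ) ≤ (d:ℝ) * A.card := by nlinarith
    linarith [hlow, h1, h2 ▸ h1, h3, h4]
  obtain ⟨S, hS, hSgood⟩ := hexist
  refine ⟨S, Finset.mem_powerset.1 hS, fun i => ?_⟩
  have hterm : (z i - ∑ a ∈ S, (a i : ℝ))^2 / W i ^ 2 < (d:ℝ) * A.card := by
    refine lt_of_le_of_lt ?_ hSgood
    refine Finset.single_le_sum
      (f := fun j => (z j - ∑ a ∈ S, ((a j : ℝ)))^2 / W j ^ 2) (fun j _ => ?_) (Finset.mem_univ i)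
    positivity
  have hW2 : (0:ℝ) < W i ^ 2 := pow_pos (hWpos i) 2
  rw [div_lt_iff₀ hW2] at hterm
  have hcast : ((∑ a ∈ S, a i : ℤ) : ℝ) = ∑ a ∈ S, (a i : ℝ) := by push_cast; ring
  rw [hcast]
  have habs : |z i - ∑ a ∈ S, (a i : ℝ)| = Real.sqrt ((z i - ∑ a ∈ S, (a i : ℝ))^2) :=
    (Real.sqrt_sq_eq_abs _).symm
  rw [habs]
  have : Real.sqrt ((z i - ∑ a ∈ S, (a i : ℝ))^2) ≤ Real.sqrt ((d:ℝ) * A.card * W i ^ 2) :=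
    Real.sqrt_le_sqrt hterm.le
  refine this.trans ?_
  rw [Real.sqrt_mul (by positivity), Real.sqrt_sq (hWpos i).le]
end

section
/- If P is a homogeneous one-dimensional arithmetic progression of length L > n contained in Σ(A) for a set A of positive integers, a is the common difference of P, and B is a set of positive integers bounded above by n with Σ_{b∈B} b > (first element of P) + a·n, then Σ(B) intersects P in a non-zero element. -/
/-- The set of subset sums of a finite set of integers. -/
def subsetSums (A : Finset ℤ) : Finset ℤ := A.powerset.image fun B => ∑ x ∈ B, x

lemma pigeon_dvd (a : ℕ) (ha : 0 < a) (C : Finset ℤ) (hC : a ≤ C.card) :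
    ∃ U ⊆ C, U.Nonempty ∧ U.card ≤ a ∧ (a : ℤ) ∣ ∑ z ∈ U, z := by
  obtain ⟨C', hC'sub, hC'card⟩ := Finset.exists_subset_card_eq hC
  haveI : NeZero a := ⟨ha.ne'⟩
  set e := C'.orderIsoOfFin hC'card with he
  set g : ℕ → ℤ := fun k => if h : k < a then (e ⟨k, h⟩ : ℤ) else 0 with hg
  set f : Fin (a + 1) → ZMod a := fun i => ((∑ k ∈ Finset.range i, g k : ℤ) : ZMod a) with hf
  obtain ⟨i, j, hij, hfij⟩ := Fintype.exists_ne_map_eq_of_card_lt f (by simp [ZMod.card])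
  -- wlog i < j
  wlog hlt : (i : ℕ) < (j : ℕ) generalizing i j
  · exact this j i hij.symm hfij.symm (by omega)
  have hinj : Set.InjOn g (Finset.Ico (i : ℕ) (j : ℕ)) := by
    intro k hk l hl hkl
    simp only [Finset.coe_Ico, Set.mem_Ico] at hk hl
    have hka : k < a := by omega
    have hla : l < a := by omega
    simp only [hg, dif_pos hka, dif_pos hla] at hkl
    have := e.injective (Subtype.coe_injective hkl)
    simpa [Fin.ext_iff] using this
  refine ⟨(Finset.Ico (i : ℕ) (j : ℕ)).image g, ?_, ?_, ?_, ?_⟩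
  · intro z hz
    simp only [Finset.mem_image, Finset.mem_Ico] at hz
    obtain ⟨k, hk, rfl⟩ := hz
    have hka : k < a := by omega
    simp only [hg, dif_pos hka]
    exact hC'sub (e ⟨k, hka⟩).2
  · exact (Finset.nonempty_Ico.2 hlt).image g
  · calc ((Finset.Ico (i : ℕ) (j : ℕ)).image g).card ≤ (Finset.Ico (i : ℕ) (j : ℕ)).card :=
        Finset.card_image_le
      _ ≤ a := by simp; omega
  · rw [Finset.sum_image (fun k hk l hl => hinj (by simpa using hk) (by simpa using hl))]
    have hsum : ∑ k ∈ Finset.Ico (i : ℕ) (j : ℕ), g k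
        = (∑ k ∈ Finset.range j, g k) - (∑ k ∈ Finset.range i, g k) := by
      rw [Finset.sum_Ico_eq_sub _ hlt.le]
    rw [hsum]
    have : (((∑ k ∈ Finset.range j, g k) - (∑ k ∈ Finset.range i, g k) : ℤ) : ZMod a) = 0 := by
      simp only [hf] at hfij
      rw [Int.cast_sub, ← hfij, sub_self]
    exact (ZMod.intCast_zmod_eq_zero_iff_dvd _ _).1 this

theorem stmt_14 (n L : ℕ) (a x : ℤ) (ha : 0 < a) (hax : a ∣ x)
    (A B : Finset ℤ) (hApos : ∀ z ∈ A, 0 < z) (hBpos : ∀ z ∈ B, 0 < z)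
    (hBle : ∀ z ∈ B, z ≤ (n : ℤ)) (hL : n < L)
    (hP : ∀ j : ℕ, j < L → x + j * a ∈ subsetSums A)
    (hsum : x + a * n < ∑ z ∈ B, z) :
    ∃ y, y ≠ 0 ∧ y ∈ subsetSums B ∧ ∃ j : ℕ, j < L ∧ y = x + j * a := by
  -- x ≥ 0
  have hx0 : 0 ≤ x := by
    have h0 := hP 0 (by omega)
    simp only [subsetSums, Finset.mem_image, Finset.mem_powerset] at h0
    obtain ⟨S, hS, hSx⟩ := h0
    have : 0 ≤ ∑ z ∈ S, z := Finset.sum_nonneg fun z hz => (hApos z (hS hz)).le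
    push_cast at hSx
    omega
  -- n ≥ 1
  have hn1 : 1 ≤ n := by
    by_contra hn
    have hn0 : n = 0 := by omega
    interval_cases n
    have : B = ∅ := Finset.eq_empty_of_forall_notMem fun z hz => by
      have := hBpos z hz; have := hBle z hz; omega
    simp [this] at hsum
    omega
  set a' := a.toNat with ha'
  have haa : (a' : ℤ) = a := Int.toNat_of_nonneg ha.le
  -- choose S maximal
  set P : Finset ℤ → Prop := fun S => a ∣ ∑ z ∈ S, z ∧ ∑ z ∈ S, z ≤ x with hPdef
  have hdec : DecidablePred P := fun S => by unfold P; infer_instance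
  set 𝒮 := B.powerset.filter P with h𝒮
  have hne : 𝒮.Nonempty := ⟨∅, by simp [h𝒮, hPdef, hx0]⟩
  obtain ⟨S, hSmem, hSmax⟩ := 𝒮.exists_max_image (fun S => ∑ z ∈ S, z) hne
  simp only [h𝒮, Finset.mem_filter, Finset.mem_powerset, hPdef] at hSmem
  obtain ⟨hSB, hSdvd, hSx⟩ := hSmem
  -- B \ S is big
  have hdiffsum : a * n < ∑ z ∈ B \ S, z := by
    rw [Finset.sum_sdiff_eq_sub hSB]
    omega
  have hcard : a' ≤ (B \ S).card := by
    by_contra hc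
    push_neg at hc
    have hb : ∑ z ∈ B \ S, z ≤ ((B \ S).card : ℤ) * n := by
      calc ∑ z ∈ B \ S, z ≤ ∑ _z ∈ B \ S, (n : ℤ) :=
            Finset.sum_le_sum fun z hz => hBle z (Finset.mem_sdiff.1 hz).1
        _ = ((B \ S).card : ℤ) * n := by rw [Finset.sum_const, nsmul_eq_mul]
    have : ((B \ S).card : ℤ) * n < (a' : ℤ) * n := by
      apply mul_lt_mul_of_pos_right _ (by exact_mod_cast hn1)
      exact_mod_cast hc
    rw [haa] at this
    omega
  have ha'pos : 0 < a' := by omega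
  obtain ⟨U, hUsub, hUne, hUcard, hUdvd⟩ := pigeon_dvd a' ha'pos (B \ S) hcard
  rw [haa] at hUdvd
  have hUB : U ⊆ B := hUsub.trans (Finset.sdiff_subset)
  have hdisj : Disjoint S U := by
    refine Finset.disjoint_left.2 fun z hzS hzU => ?_
    exact (Finset.mem_sdiff.1 (hUsub hzU)).2 hzS
  have hUpos : 0 < ∑ z ∈ U, z :=
    Finset.sum_pos (fun z hz => hBpos z (hUB hz)) hUne
  have hUle : ∑ z ∈ U, z ≤ a * n := by
    calc ∑ z ∈ U, z ≤ ∑ _z ∈ U, (n : ℤ) := Finset.sum_le_sum fun z hz => hBle z (hUB hz)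
      _ = (U.card : ℤ) * n := by rw [Finset.sum_const, nsmul_eq_mul]
      _ ≤ (a' : ℤ) * n := by
          apply mul_le_mul_of_nonneg_right _ (by positivity)
          exact_mod_cast hUcard
      _ = a * n := by rw [haa]
  set y := ∑ z ∈ S ∪ U, z with hy
  have hysum : y = ∑ z ∈ S, z + ∑ z ∈ U, z := Finset.sum_union hdisj
  have hydvd : a ∣ y := by rw [hysum]; exact dvd_add hSdvd hUdvd
  have hygt : x < y := by
    by_contra hle
    push_neg at hle
    have hmem : S ∪ U ∈ 𝒮 := by
      simp only [h𝒮, Finset.mem_filter, Finset.mem_powerset, hPdef]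
      exact ⟨Finset.union_subset hSB hUB, hydvd, hle⟩
    have := hSmax _ hmem
    rw [← hy] at this
    omega
  have hyle : y ≤ x + a * n := by rw [hysum]; omega
  -- produce j
  obtain ⟨d, hd⟩ : a ∣ y - x := dvd_sub hydvd hax
  have hdpos : 0 < d := by
    have : 0 < a * d := by omega
    nlinarith
  have hdn : d ≤ n := by
    have : a * d ≤ a * n := by omega
    exact le_of_mul_le_mul_left this ha
  refine ⟨y, by omega, ?_, d.toNat, ?_, ?_⟩
  · simp only [subsetSums, Finset.mem_image, Finset.mem_powerset]
    exact ⟨S ∪ U, Finset.union_subset hSB hUB, rfl⟩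
  · omega
  · rw [Int.toNat_of_nonneg hdpos.le, mul_comm]
    omega
end
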